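/- The leading coefficient in the inverse factorial expansion of Γ(s)Γ(1-b+βs)/Γ(1-a+αs) is A_0 = κ^{-1/2-ϑ} α^{a-1/2} β^{1/2-b}; precisely, Γ(s)Γ(1-b+βs)/(Γ(1-a+αs) · κ(hκ^κ)^{-s} Γ(κs+ϑ)) → A_0 as s → +∞ along the positive real axis, where κ = 1+β-α, h = α^α β^{-β}, ϑ = a-b. -/

import Mathlib

open Real Filter Topology

/-- Stirling quotient for the Gamma function. -/
noncomputable def Sg (x : ℝ) : ℝ := Real.Gamma x / (x ^ (x - 1/2) * Real.exp (-x))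


/-- Stirling quotient for the Gamma function. -/

lemma wendel_upper {x t : ℝ} (hx : 0 < x) (ht : 0 ≤ t) (ht1 : t ≤ 1) :
    Real.Gamma (x + t) ≤ Real.Gamma x * x ^ t := by
  have hΓ : 0 < Real.Gamma x := Real.Gamma_pos_of_pos hx
  rcases eq_or_lt_of_le ht with h0 | h0
  · simp [← h0]
  rcases eq_or_lt_of_le ht1 with h1 | h1
  · subst h1; rw [Real.Gamma_add_one hx.ne', Real.rpow_one]; nlinarith
  have key := Real.Gamma_mul_add_mul_le_rpow_Gamma_mul_rpow_Gamma
    (s := x) (t := x + 1) (a := 1 - t) (b := t) hx (by linarith) (by linarith) h0 (by ring)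
  have harg : (1 - t) * x + t * (x + 1) = x + t := by ring
  rw [harg, Real.Gamma_add_one hx.ne'] at key
  calc Real.Gamma (x + t) ≤ Real.Gamma x ^ (1 - t) * (x * Real.Gamma x) ^ t := key
    _ = Real.Gamma x * x ^ t := by
        rw [Real.mul_rpow hx.le hΓ.le, show Real.Gamma x ^ (1-t) * (x ^ t * Real.Gamma x ^ t)
          = Real.Gamma x ^ (1-t) * Real.Gamma x ^ t * x ^ t by ring, ← Real.rpow_add hΓ]
        norm_num

lemma wendel_lower {x t : ℝ} (hx : 0 < x) (ht : 0 ≤ t) (ht1 : t ≤ 1) :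
    Real.Gamma x * x ≤ Real.Gamma (x + t) * (x + t) ^ (1 - t) := by
  rcases eq_or_lt_of_le ht with h0 | h0
  · rw [← h0]; simp [Real.rpow_one]
  rcases eq_or_lt_of_le ht1 with h1 | h1
  · subst h1
    rw [Real.Gamma_add_one hx.ne']
    simp
    nlinarith [Real.Gamma_pos_of_pos hx]
  have hxt : 0 < x + t := by linarith
  have hΓ : 0 < Real.Gamma (x + t) := Real.Gamma_pos_of_pos hxt
  have key := Real.Gamma_mul_add_mul_le_rpow_Gamma_mul_rpow_Gamma
    (s := x + t) (t := x + t + 1) (a := t) (b := 1 - t) hxt (by linarith) h0 (by linarith) (by ring)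
  have harg : t * (x + t) + (1 - t) * (x + t + 1) = x + 1 := by ring
  rw [harg, Real.Gamma_add_one hx.ne', Real.Gamma_add_one hxt.ne'] at key
  calc Real.Gamma x * x = x * Real.Gamma x := by ring
    _ ≤ Real.Gamma (x + t) ^ t * ((x + t) * Real.Gamma (x + t)) ^ (1 - t) := key
    _ = Real.Gamma (x + t) * (x + t) ^ (1 - t) := by
        rw [Real.mul_rpow hxt.le hΓ.le, ← mul_assoc,
          mul_comm (Real.Gamma (x+t) ^ t) ((x+t) ^ (1-t)), mul_assoc, ← Real.rpow_add hΓ]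
        norm_num
        ring

lemma Sg_nat_eq (n : ℕ) (hn : 1 ≤ n) :
    Sg n = Real.sqrt 2 * Stirling.stirlingSeq n := by
  have hn0 : (0:ℝ) < n := by exact_mod_cast hn
  have hfac : Real.Gamma n = (Nat.factorial (n-1) : ℝ) := by
    rw [show (n:ℝ) = ((n-1:ℕ):ℝ) + 1 by
      rw [Nat.cast_sub hn]; push_cast; ring]
    exact Real.Gamma_nat_eq_factorial _
  have hfac2 : (Nat.factorial (n-1) : ℝ) * n = (Nat.factorial n : ℝ) := by
    rw [← Nat.cast_mul]
    norm_cast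
    rw [← Nat.succ_pred_eq_of_pos hn, Nat.factorial_succ]
    simp [Nat.succ_pred_eq_of_pos hn]
    ring
  have e1 : (n:ℝ) ^ ((n:ℝ) - 1/2) = (n:ℝ)^(n:ℕ) / (n:ℝ) ^ ((1:ℝ)/2) := by
    rw [← Real.rpow_natCast (n:ℝ) n, ← Real.rpow_sub hn0]
  have e2 : Real.sqrt (2*(n:ℝ)) = Real.sqrt 2 * (n:ℝ)^((1:ℝ)/2) := by
    rw [Real.sqrt_mul (by norm_num), Real.sqrt_eq_rpow]
    rw [Real.sqrt_eq_rpow]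
  have e3 : ((n:ℝ)/Real.exp 1)^(n:ℕ) = (n:ℝ)^(n:ℕ) / Real.exp n := by
    rw [div_pow, Real.exp_one_pow]
  rw [Sg, Stirling.stirlingSeq, hfac, e1, e2, e3, Real.exp_neg]
  have h2 : (0:ℝ) < Real.sqrt 2 := by positivity
  have h3 : (0:ℝ) < (n:ℝ)^((1:ℝ)/2) := by positivity
  have h4 : (0:ℝ) < (n:ℝ)^(n:ℕ) := by positivity
  have h5 : (0:ℝ) < Real.exp n := Real.exp_pos _
  have h6 : (n:ℝ)^((1:ℝ)/2) * (n:ℝ)^((1:ℝ)/2) = (n:ℝ) := by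
    rw [← Real.rpow_add hn0]; norm_num
  field_simp
  linear_combination (Nat.factorial (n-1):ℝ) * h6 + hfac2

lemma tendsto_Sg_nat : Tendsto (fun n : ℕ => Sg n) atTop (𝓝 (Real.sqrt (2 * π))) := by
  have h2 : Tendsto (fun n : ℕ => Real.sqrt 2 * Stirling.stirlingSeq n) atTop
      (𝓝 (Real.sqrt 2 * Real.sqrt π)) := Stirling.tendsto_stirlingSeq_sqrt_pi.const_mul _
  rw [← Real.sqrt_mul (by norm_num) π] at h2
  apply h2.congr'
  filter_upwards [eventually_ge_atTop 1] with n hn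
  exact (Sg_nat_eq n hn).symm

lemma Sg_eq {x : ℝ} (hx : 0 < x) :
    Sg x = Real.Gamma x * Real.exp (x - (x - 1/2) * Real.log x) := by
  rw [Sg, Real.rpow_def_of_pos hx, ← Real.exp_add, div_eq_mul_inv, ← Real.exp_neg]
  ring_nf

lemma Sg_pos {x : ℝ} (hx : 0 < x) : 0 < Sg x := by
  rw [Sg_eq hx]
  exact mul_pos (Real.Gamma_pos_of_pos hx) (Real.exp_pos _)

lemma Sg_upper {x : ℝ} (hx : 2 ≤ x) :
    Sg x ≤ Sg (⌊x⌋₊ : ℝ) * Real.exp (1/(2*x)) := by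
  set n : ℝ := (⌊x⌋₊ : ℝ) with hn
  have hx0 : (0:ℝ) < x := by linarith
  have hn2 : (2:ℝ) ≤ n := by
    have h : (2:ℕ) ≤ ⌊x⌋₊ := Nat.le_floor (by exact_mod_cast hx)
    rw [hn]; exact_mod_cast h
  have hn0 : (0:ℝ) < n := by linarith
  have hnx : n ≤ x := Nat.floor_le hx0.le
  have hxn1 : x < n + 1 := Nat.lt_floor_add_one x
  set t : ℝ := x - n with htdef
  have ht0 : 0 ≤ t := by simp [htdef]; linarith
  have ht1 : t ≤ 1 := by simp [htdef]; linarith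
  have hW : Real.Gamma x ≤ Real.Gamma n * Real.exp (t * Real.log n) := by
    have := wendel_upper hn0 ht0 ht1
    rw [show n + t = x by ring, Real.rpow_def_of_pos hn0] at this
    rwa [mul_comm (Real.log n) t] at this
  rw [Sg_eq hx0, Sg_eq hn0]
  have hΓn : 0 < Real.Gamma n := Real.Gamma_pos_of_pos hn0
  calc Real.Gamma x * Real.exp (x - (x - 1/2) * Real.log x)
      ≤ Real.Gamma n * Real.exp (t * Real.log n) * Real.exp (x - (x - 1/2) * Real.log x) := by
        exact mul_le_mul_of_nonneg_right hW (Real.exp_pos _).le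
    _ = Real.Gamma n * Real.exp (t * Real.log n + (x - (x - 1/2) * Real.log x)) := by
        rw [mul_assoc, ← Real.exp_add]
    _ ≤ Real.Gamma n * Real.exp (n - (n - 1/2) * Real.log n + 1/(2*x)) := by
        apply mul_le_mul_of_nonneg_left _ hΓn.le
        rw [Real.exp_le_exp]
        -- key exponent inequality
        have hlog : x * (Real.log n - Real.log x) ≤ n - x := by
          have h1 : Real.log (n/x) ≤ n/x - 1 := Real.log_le_sub_one_of_pos (by positivity)
          rw [Real.log_div hn0.ne' hx0.ne'] at h1
          have := mul_le_mul_of_nonneg_left h1 hx0.le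
          calc x * (Real.log n - Real.log x) ≤ x * (n/x - 1) := this
            _ = n - x := by field_simp
        have hlog' : (2*x-1) * (x * (Real.log n - Real.log x)) ≤ (2*x-1) * (n - x) :=
          mul_le_mul_of_nonneg_left hlog (by linarith)
        have key : (2*x) * ((x - 1/2) * (Real.log n - Real.log x) + (x - n)) ≤ 1 := by
          nlinarith [hlog']
        have h2x : (0:ℝ) < 2*x := by linarith
        have hfin : (x - 1/2) * (Real.log n - Real.log x) + (x - n) ≤ 1/(2*x) := by
          rw [le_div_iff₀ h2x]; nlinarith [key]
        nlinarith [hfin]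
    _ = Real.Gamma n * Real.exp (n - (n - 1/2) * Real.log n) * Real.exp (1/(2*x)) := by
        rw [mul_assoc, ← Real.exp_add]

lemma Sg_lower {x : ℝ} (hx : 2 ≤ x) :
    Sg (⌊x⌋₊ : ℝ) * ((x-1)/x) ≤ Sg x := by
  set n : ℝ := (⌊x⌋₊ : ℝ) with hn
  have hx0 : (0:ℝ) < x := by linarith
  have hn2 : (2:ℝ) ≤ n := by
    have h : (2:ℕ) ≤ ⌊x⌋₊ := Nat.le_floor (by exact_mod_cast hx)
    rw [hn]; exact_mod_cast h
  have hn0 : (0:ℝ) < n := by linarith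
  have hnx : n ≤ x := Nat.floor_le hx0.le
  have hxn1 : x < n + 1 := Nat.lt_floor_add_one x
  set t : ℝ := x - n with htdef
  have ht0 : 0 ≤ t := by simp [htdef]; linarith
  have ht1 : t ≤ 1 := by simp [htdef]; linarith
  have hx1 : (0:ℝ) < x - 1 := by linarith
  have hΓn : 0 < Real.Gamma n := Real.Gamma_pos_of_pos hn0
  have hW : Real.Gamma n * Real.exp (Real.log n + (t-1) * Real.log x) ≤ Real.Gamma x := by
    have h := wendel_lower hn0 ht0 ht1
    rw [show n + t = x by ring] at h
    have hxp : (0:ℝ) < x ^ ((1:ℝ)-t) := Real.rpow_pos_of_pos hx0 _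
    have he : Real.exp (Real.log n + (t-1)*Real.log x) = n * (x ^ ((1:ℝ)-t))⁻¹ := by
      rw [Real.exp_add, Real.exp_log hn0, Real.rpow_def_of_pos hx0, ← Real.exp_neg]
      ring_nf
    rw [he, ← mul_assoc, ← div_eq_mul_inv]
    exact (div_le_iff₀ hxp).mpr h
  rw [Sg_eq hx0, Sg_eq hn0]
  calc Real.Gamma n * Real.exp (n - (n - 1/2) * Real.log n) * ((x-1)/x)
      = Real.Gamma n * Real.exp (n - (n - 1/2) * Real.log n
          + (Real.log (x-1) - Real.log x)) := by
        rw [Real.exp_add, ← mul_assoc]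
        congr 1
        rw [Real.exp_sub, Real.exp_log hx1, Real.exp_log hx0]
    _ ≤ Real.Gamma n * Real.exp (Real.log n + (t-1) * Real.log x
          + (x - (x - 1/2) * Real.log x)) := by
        apply mul_le_mul_of_nonneg_left _ hΓn.le
        rw [Real.exp_le_exp]
        -- key exponent inequality
        have h1 : n * (Real.log x - Real.log n) ≤ x - n := by
          have h := Real.log_le_sub_one_of_pos (show (0:ℝ) < x/n by positivity)
          rw [Real.log_div hx0.ne' hn0.ne'] at h
          have := mul_le_mul_of_nonneg_left h hn0.le
          calc n * (Real.log x - Real.log n) ≤ n * (x/n - 1) := this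
            _ = x - n := by field_simp
        have h2 : n * (Real.log (x-1) - Real.log n) ≤ x - 1 - n := by
          have h := Real.log_le_sub_one_of_pos (show (0:ℝ) < (x-1)/n by positivity)
          rw [Real.log_div hx1.ne' hn0.ne'] at h
          have := mul_le_mul_of_nonneg_left h hn0.le
          calc n * (Real.log (x-1) - Real.log n) ≤ n * ((x-1)/n - 1) := this
            _ = x - 1 - n := by field_simp
        have h1' : (2*n-1) * (n * (Real.log x - Real.log n)) ≤ (2*n-1) * (x - n) :=
          mul_le_mul_of_nonneg_left h1 (by linarith)
        have key : (2*n) * ((n - 1/2) * (Real.log x - Real.log n)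
            + (Real.log (x-1) - Real.log n)) ≤ (2*n) * t := by
          nlinarith [h1', h2]
        have := le_of_mul_le_mul_left key (show (0:ℝ) < 2*n by linarith)
        nlinarith [this]
    _ = Real.Gamma n * Real.exp (Real.log n + (t-1) * Real.log x)
          * Real.exp (x - (x - 1/2) * Real.log x) := by
        rw [mul_assoc, ← Real.exp_add]
    _ ≤ Real.Gamma x * Real.exp (x - (x - 1/2) * Real.log x) :=
        mul_le_mul_of_nonneg_right hW (Real.exp_pos _).le

lemma tendsto_Sg : Tendsto Sg atTop (𝓝 (Real.sqrt (2 * π))) := by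
  have hfloor : Tendsto (fun x : ℝ => Sg (⌊x⌋₊ : ℝ)) atTop (𝓝 (Real.sqrt (2 * π))) :=
    tendsto_Sg_nat.comp tendsto_nat_floor_atTop
  have hup : Tendsto (fun x : ℝ => Sg (⌊x⌋₊ : ℝ) * Real.exp (1/(2*x))) atTop
      (𝓝 (Real.sqrt (2 * π))) := by
    have he : Tendsto (fun x : ℝ => Real.exp (1/(2*x))) atTop (𝓝 1) := by
      rw [show (1:ℝ) = Real.exp 0 by simp]
      apply Real.continuous_exp.continuousAt.tendsto.comp
      have h2 : Tendsto (fun x : ℝ => 2*x) atTop atTop :=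
        (tendsto_id.const_mul_atTop (by norm_num))
      have h3 : Tendsto (fun x : ℝ => (2*x)⁻¹) atTop (𝓝 0) :=
        tendsto_inv_atTop_zero.comp h2
      simpa [one_div] using h3
    simpa using hfloor.mul he
  have hlo : Tendsto (fun x : ℝ => Sg (⌊x⌋₊ : ℝ) * ((x-1)/x)) atTop
      (𝓝 (Real.sqrt (2 * π))) := by
    have he : Tendsto (fun x : ℝ => (x-1)/x) atTop (𝓝 1) := by
      have h2 : Tendsto (fun x : ℝ => 1 - 1/x) atTop (𝓝 (1 - 0)) := by
        apply tendsto_const_nhds.sub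
        exact (tendsto_inv_atTop_zero : Tendsto (fun r : ℝ => r⁻¹) atTop (𝓝 0)).congr (fun x => (one_div x).symm)
      rw [sub_zero] at h2
      apply h2.congr'
      filter_upwards [eventually_gt_atTop (0:ℝ)] with x hx
      field_simp
    simpa using hfloor.mul he
  refine tendsto_of_tendsto_of_tendsto_of_le_of_le' hlo hup ?_ ?_
  · filter_upwards [eventually_ge_atTop (2:ℝ)] with x hx using Sg_lower hx
  · filter_upwards [eventually_ge_atTop (2:ℝ)] with x hx using Sg_upper hx

lemma Gamma_eq_Sg {y : ℝ} (hy : 0 < y) :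
    Real.Gamma y = Sg y * Real.exp ((y - 1/2) * Real.log y - y) := by
  rw [Sg_eq hy, mul_assoc, ← Real.exp_add]
  simp

lemma tendsto_corr (c d e : ℝ) (hc : 0 < c) :
    Tendsto (fun s : ℝ => (c*s + d) * Real.log (1 + e/(c*s))) atTop (𝓝 e) := by
  have h1 : Tendsto (fun s : ℝ => c*s) atTop atTop := tendsto_id.const_mul_atTop hc
  have h3 : Tendsto (fun s : ℝ => (c*s) * Real.log (1 + e/(c*s))) atTop (𝓝 e) :=
    (Real.tendsto_mul_log_one_add_div_atTop e).comp h1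
  have h4 : Tendsto (fun s : ℝ => Real.log (1 + e/(c*s))) atTop (𝓝 0) := by
    have h5 : Tendsto (fun s : ℝ => 1 + e/(c*s)) atTop (𝓝 (1+0)) :=
      tendsto_const_nhds.add (Tendsto.div_atTop tendsto_const_nhds h1)
    rw [add_zero] at h5
    have := (Real.continuousAt_log one_ne_zero).tendsto.comp h5
    simpa [Function.comp_def] using this
  have h6 := h3.add (h4.const_mul d)
  rw [show e + d * 0 = e by ring] at h6
  exact h6.congr (fun s => by ring)

lemma tendsto_affine {c : ℝ} (d : ℝ) (hc : 0 < c) :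
    Tendsto (fun s : ℝ => d + c*s) atTop atTop :=
  tendsto_atTop_add_const_left _ d (tendsto_id.const_mul_atTop hc)



lemma main_identity (α β a b : ℝ) (hα : 0 < α) (hβ : 0 < β) (hκ : 0 < 1 + β - α)
    (s : ℝ) (hs : 0 < s) (h2 : 0 < 1 - b + β * s) (h3 : 0 < 1 - a + α * s)
    (h4 : 0 < (1 + β - α) * s + (a - b)) :
    Sg s * Sg (1 - b + β * s) / (Sg (1 - a + α * s) * Sg ((1 + β - α) * s + (a - b))) *
      Real.exp ((β*s + (1/2 - b)) * Real.log (1 + (1-b)/(β*s))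
        - (α*s + (1/2 - a)) * Real.log (1 + (1-a)/(α*s))
        - ((1+β-α)*s + ((a-b) - 1/2)) * Real.log (1 + (a-b)/((1+β-α)*s))) *
      ((1 + β - α) ^ (-(1:ℝ)/2 - (a - b)) * α ^ (a - 1/2) * β ^ (1/2 - b))
    = Real.Gamma s * Real.Gamma (1 - b + β * s) /
        (Real.Gamma (1 - a + α * s) *
          ((1 + β - α) * ((α ^ α * β ^ (-β)) * (1 + β - α) ^ (1 + β - α)) ^ (-s) *
            Real.Gamma ((1 + β - α) * s + (a - b)))) := by
  have hβs : (0:ℝ) < β * s := by positivity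
  have hαs : (0:ℝ) < α * s := by positivity
  have hκs : (0:ℝ) < (1+β-α) * s := by positivity
  have hP0 : (0:ℝ) < (α ^ α * β ^ (-β)) * (1 + β - α) ^ (1 + β - α) := by positivity
  -- log expansions
  have hm2 : (0:ℝ) < 1 + (1-b)/(β*s) := by
    have : 1 + (1-b)/(β*s) = (1 - b + β*s)/(β*s) := by field_simp; ring
    rw [this]; positivity
  have hm3 : (0:ℝ) < 1 + (1-a)/(α*s) := by
    have : 1 + (1-a)/(α*s) = (1 - a + α*s)/(α*s) := by field_simp; ring
    rw [this]; positivity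
  have hm4 : (0:ℝ) < 1 + (a-b)/((1+β-α)*s) := by
    have : 1 + (a-b)/((1+β-α)*s) = ((1+β-α)*s + (a-b))/((1+β-α)*s) := by field_simp
    rw [this]; positivity
  have e2 : Real.log (1 - b + β * s)
      = Real.log β + Real.log s + Real.log (1 + (1-b)/(β*s)) := by
    rw [← Real.log_mul hβ.ne' hs.ne', ← Real.log_mul hβs.ne' hm2.ne']
    congr 1
    field_simp
    ring
  have e3 : Real.log (1 - a + α * s)
      = Real.log α + Real.log s + Real.log (1 + (1-a)/(α*s)) := by
    rw [← Real.log_mul hα.ne' hs.ne', ← Real.log_mul hαs.ne' hm3.ne']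
    congr 1
    field_simp
    ring
  have e4 : Real.log ((1+β-α) * s + (a-b))
      = Real.log (1+β-α) + Real.log s + Real.log (1 + (a-b)/((1+β-α)*s)) := by
    rw [← Real.log_mul hκ.ne' hs.ne', ← Real.log_mul hκs.ne' hm4.ne']
    congr 1
    field_simp
  have eP : Real.log ((α ^ α * β ^ (-β)) * (1 + β - α) ^ (1 + β - α))
      = α * Real.log α - β * Real.log β + (1+β-α) * Real.log (1+β-α) := by
    rw [Real.log_mul (by positivity) (by positivity),
      Real.log_mul (by positivity) (by positivity),
      Real.log_rpow hα, Real.log_rpow hβ, Real.log_rpow hκ]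
    ring
  -- collapse the constant×rpow into an exponential
  have hcollapse : (1 + β - α) * ((α ^ α * β ^ (-β)) * (1 + β - α) ^ (1 + β - α)) ^ (-s)
      = Real.exp (Real.log (1+β-α)
          + Real.log ((α ^ α * β ^ (-β)) * (1 + β - α) ^ (1 + β - α)) * (-s)) := by
    rw [Real.exp_add, Real.exp_log hκ, Real.rpow_def_of_pos hP0]
  have eA : (1 + β - α) ^ (-(1:ℝ)/2 - (a - b)) * α ^ (a - 1/2) * β ^ (1/2 - b)
      = Real.exp (Real.log (1+β-α) * (-(1:ℝ)/2 - (a-b)) + Real.log α * (a - 1/2)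
          + Real.log β * (1/2 - b)) := by
    rw [Real.exp_add, Real.exp_add, ← Real.rpow_def_of_pos hκ, ← Real.rpow_def_of_pos hα,
      ← Real.rpow_def_of_pos hβ]
  have key : Real.exp ((s - 1/2) * Real.log s - s)
        * Real.exp (((1 - b + β * s) - 1/2) * Real.log (1 - b + β * s) - (1 - b + β * s))
        / (Real.exp (((1 - a + α * s) - 1/2) * Real.log (1 - a + α * s) - (1 - a + α * s))
          * (Real.exp (Real.log (1+β-α)
              + Real.log ((α ^ α * β ^ (-β)) * (1 + β - α) ^ (1 + β - α)) * (-s))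
            * Real.exp ((((1+β-α) * s + (a-b)) - 1/2) * Real.log ((1+β-α) * s + (a-b))
                - ((1+β-α) * s + (a-b)))))
      = Real.exp ((β*s + (1/2 - b)) * Real.log (1 + (1-b)/(β*s))
          - (α*s + (1/2 - a)) * Real.log (1 + (1-a)/(α*s))
          - ((1+β-α)*s + ((a-b) - 1/2)) * Real.log (1 + (a-b)/((1+β-α)*s)))
        * ((1 + β - α) ^ (-(1:ℝ)/2 - (a - b)) * α ^ (a - 1/2) * β ^ (1/2 - b)) := by
    rw [eA, ← Real.exp_add, ← Real.exp_add, ← Real.exp_add, ← Real.exp_add, ← Real.exp_sub,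
      Real.exp_eq_exp]
    linear_combination (β*s + 1/2 - b) * e2 - (α*s + 1/2 - a) * e3
      - ((1+β-α)*s + (a-b) - 1/2) * e4 + s * eP
  rw [Gamma_eq_Sg hs, Gamma_eq_Sg h2, Gamma_eq_Sg h3, Gamma_eq_Sg h4, hcollapse, mul_assoc, ← key]
  have n1 := (Sg_pos h3).ne'
  have n2 := (Sg_pos h4).ne'
  have n3 := (Real.exp_pos (((1 - a + α * s) - 1/2) * Real.log (1 - a + α * s) - (1 - a + α * s))).ne'
  field_simp

/-- Leading coefficient of the inverse factorial expansion: with `κ = 1+β-α`,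
`h = α^α β^{-β}`, `ϑ = a-b`, one has
`Γ(s)Γ(1-b+βs)/(Γ(1-a+αs) κ (hκ^κ)^{-s} Γ(κs+ϑ)) → A₀ = κ^{-1/2-ϑ} α^{a-1/2} β^{1/2-b}`
as `s → +∞` along the positive real axis. -/
theorem inverse_factorial_leading_coefficient (α β a b : ℝ)
    (hα : 0 < α) (hβ : 0 < β) (hκ : 0 < 1 + β - α) :
    Tendsto (fun s : ℝ =>
        Real.Gamma s * Real.Gamma (1 - b + β * s) /
          (Real.Gamma (1 - a + α * s) *
            ((1 + β - α) * ((α ^ α * β ^ (-β)) * (1 + β - α) ^ (1 + β - α)) ^ (-s) *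
              Real.Gamma ((1 + β - α) * s + (a - b)))))
      atTop
      (𝓝 ((1 + β - α) ^ (-(1:ℝ)/2 - (a - b)) * α ^ (a - 1/2) * β ^ (1/2 - b))) := by
  have hL : (0:ℝ) < Real.sqrt (2*π) := Real.sqrt_pos.mpr (by positivity)
  -- affine maps to atTop
  have t2 : Tendsto (fun s : ℝ => 1 - b + β * s) atTop atTop := tendsto_affine (1-b) hβ
  have t3 : Tendsto (fun s : ℝ => 1 - a + α * s) atTop atTop := tendsto_affine (1-a) hα
  have t4 : Tendsto (fun s : ℝ => (1+β-α) * s + (a-b)) atTop atTop := by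
    have := tendsto_affine (a-b) hκ
    exact this.congr (fun s => by ring)
  -- Sg ratio tends to 1
  have TS : Tendsto (fun s : ℝ => Sg s * Sg (1 - b + β * s) /
      (Sg (1 - a + α * s) * Sg ((1+β-α) * s + (a-b)))) atTop (𝓝 1) := by
    have h := ((tendsto_Sg.mul (tendsto_Sg.comp t2)).div
      ((tendsto_Sg.comp t3).mul (tendsto_Sg.comp t4)) (by positivity))
    have heq : Real.sqrt (2*π) * Real.sqrt (2*π) / (Real.sqrt (2*π) * Real.sqrt (2*π)) = 1 := by
      field_simp
    rwa [heq] at h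
  -- corrections tend to 0
  have TG : Tendsto (fun s : ℝ =>
      (β*s + (1/2 - b)) * Real.log (1 + (1-b)/(β*s))
      - (α*s + (1/2 - a)) * Real.log (1 + (1-a)/(α*s))
      - ((1+β-α)*s + ((a-b) - 1/2)) * Real.log (1 + (a-b)/((1+β-α)*s))) atTop (𝓝 0) := by
    have h := ((tendsto_corr β (1/2-b) (1-b) hβ).sub
      (tendsto_corr α (1/2-a) (1-a) hα)).sub (tendsto_corr (1+β-α) ((a-b)-1/2) (a-b) hκ)
    have he : (1-b) - (1-a) - (a-b) = 0 := by ring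
    rwa [he] at h
  have TExp : Tendsto (fun s : ℝ => Real.exp (
      (β*s + (1/2 - b)) * Real.log (1 + (1-b)/(β*s))
      - (α*s + (1/2 - a)) * Real.log (1 + (1-a)/(α*s))
      - ((1+β-α)*s + ((a-b) - 1/2)) * Real.log (1 + (a-b)/((1+β-α)*s)))) atTop (𝓝 1) := by
    have := (Real.continuous_exp.continuousAt (x := 0)).tendsto.comp TG
    simpa [Function.comp_def] using this
  have Tfinal := (TS.mul TExp).mul_const
    ((1 + β - α) ^ (-(1:ℝ)/2 - (a - b)) * α ^ (a - 1/2) * β ^ (1/2 - b))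
  rw [mul_one, one_mul] at Tfinal
  apply Tfinal.congr'
  filter_upwards [eventually_gt_atTop (0:ℝ), t2.eventually_gt_atTop 0,
    t3.eventually_gt_atTop 0, t4.eventually_gt_atTop 0] with s hs h2 h3 h4
  exact main_identity α β a b hα hβ hκ s hs h2 h3 h4
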